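/- Progress lemma, second form: under the interpolation setup, for 0 < λ ≤ 1, [Γ(v°,ρ_λ) − Γ(v°,ρ₀)] + Γ(v̂_λ, ρ₀) = (1−λ)⟨Δv₀, ρ_λ − ρ₀⟩ + ⟨DΦ(ρ₀) − DΦ(ρ_λ), ρ_λ − ρ₀⟩. -/
import Mathlib


/-- Excess energy `Γ(v,ρ) := F(ρ) + ⟨v,ρ⟩ − E(v)`. -/
noncomputable def Gam {B : Type*} [NormedAddCommGroup B] [NormedSpace ℝ B]
    (F : B → EReal) (E : (B →L[ℝ] ℝ) → ℝ) (v : B →L[ℝ] ℝ) (ρ : B) : EReal :=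
  F ρ + (v ρ : EReal) - (E v : EReal)


lemma gam_fin (A : EReal) (hbot : A ≠ ⊥) (c d : ℝ)
    (h : A + (c : EReal) - (d : EReal) = 0) : A = ((d - c : ℝ) : EReal) := by
  have htop : A ≠ ⊤ := by
    intro h'
    rw [h'] at h
    simp [EReal.top_add_of_ne_bot, EReal.top_sub_coe] at h
  lift A to ℝ using ⟨htop, hbot⟩
  norm_cast at h ⊢
  linarith

/-- Progress lemma, second form:
`[Γ(v°,ρ_λ) − Γ(v°,ρ₀)] + Γ(v̂_λ, ρ₀)
  = (1−λ)⟨Δv₀, ρ_λ − ρ₀⟩ + ⟨DΦ(ρ₀) − DΦ(ρ_λ), ρ_λ − ρ₀⟩`. -/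
theorem progress_lemma_second_form
    {B : Type*} [NormedAddCommGroup B] [NormedSpace ℝ B]
    (F₀ : B → EReal) (hFbot : ∀ σ : B, F₀ σ ≠ ⊥)
    (E₀ : (B →L[ℝ] ℝ) → ℝ)
    (hE₀ : ∀ v : B →L[ℝ] ℝ, (⨅ σ : B, F₀ σ + (v σ : EReal)) = (E₀ v : EReal))
    (Φ : B → ℝ) (DΦ : B → (B →L[ℝ] ℝ))
    (hΦ : ∀ ρ σ : B, HasDerivAt (fun t : ℝ => Φ (ρ + t • σ)) (DΦ ρ σ) 0)
    (E : (B →L[ℝ] ℝ) → ℝ)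
    (hE : ∀ v : B →L[ℝ] ℝ,
      (⨅ σ : B, (F₀ σ + (Φ σ : EReal)) + (v σ : EReal)) = (E v : EReal))
    -- interpolation setup
    (vt v₀ : B →L[ℝ] ℝ) (ρ₀ : B)
    (hGP₀ : Gam F₀ E₀ v₀ ρ₀ = 0)
    (vhat₀ : B →L[ℝ] ℝ) (hvhat₀ : vhat₀ = v₀ + DΦ ρ₀)
    (Δv₀ : B →L[ℝ] ℝ) (hΔv₀ : Δv₀ = vt - vhat₀)
    (v₁ : B →L[ℝ] ℝ) (hv₁ : v₁ = v₀ + Δv₀)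
    (lam : ℝ) (hlam : 0 < lam) (hlam1 : lam ≤ 1)
    (vlam : B →L[ℝ] ℝ) (hvlam : vlam = (1 - lam) • v₀ + lam • v₁)
    (ρlam : B) (hGP₀lam : Gam F₀ E₀ vlam ρlam = 0)
    (vhatlam : B →L[ℝ] ℝ) (hvhatlam : vhatlam = vlam + DΦ ρlam)
    (hGPhat₀ : Gam (fun σ => F₀ σ + (Φ σ : EReal)) E vhat₀ ρ₀ = 0)
    (hGPhatlam : Gam (fun σ => F₀ σ + (Φ σ : EReal)) E vhatlam ρlam = 0) :
    (Gam (fun σ => F₀ σ + (Φ σ : EReal)) E vt ρlam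
        - Gam (fun σ => F₀ σ + (Φ σ : EReal)) E vt ρ₀)
      + Gam (fun σ => F₀ σ + (Φ σ : EReal)) E vhatlam ρ₀
      = (((1 - lam) * (Δv₀ (ρlam - ρ₀))
          + (DΦ ρ₀ - DΦ ρlam) (ρlam - ρ₀) : ℝ) : EReal) := by
  have hbot₀ : F₀ ρ₀ + (Φ ρ₀ : EReal) ≠ ⊥ := by
    simp [EReal.add_eq_bot_iff, hFbot]
  have hbotl : F₀ ρlam + (Φ ρlam : EReal) ≠ ⊥ := by
    simp [EReal.add_eq_bot_iff, hFbot]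
  have h₀ : F₀ ρ₀ + (Φ ρ₀ : EReal) = ((E vhat₀ - vhat₀ ρ₀ : ℝ) : EReal) :=
    gam_fin _ hbot₀ _ _ hGPhat₀
  have hl : F₀ ρlam + (Φ ρlam : EReal) = ((E vhatlam - vhatlam ρlam : ℝ) : EReal) :=
    gam_fin _ hbotl _ _ hGPhatlam
  have hvt : vt = Δv₀ + vhat₀ := by rw [hΔv₀]; abel
  simp only [Gam, h₀, hl, ← EReal.coe_add, ← EReal.coe_sub]
  norm_cast
  subst hvhatlam hvlam hv₁ hvhat₀ hvt
  simp only [ContinuousLinearMap.add_apply, ContinuousLinearMap.sub_apply,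
    ContinuousLinearMap.smul_apply, map_sub, smul_eq_mul]
  ring
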